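/- arXiv:1603.00361 — 7 statements merged into one kernel-verified Lean document; each statement's English description precedes it below -/
import Mathlib

section
/- Let ℓ ≥ 1 and let u, v ∈ Σ* satisfy u ∼_ℓ v. Suppose u = u'·a·u'' and v = v'·a·v'' for some letter a ∈ Σ such that a does not occur in u' or in v'. Then u'' ∼_{ℓ−1} v''. -/
/-- The set of (scattered) subsequences of `w` of length at most `k`. -/
def subk {α : Type*} (k : ℕ) (w : List α) : Set (List α) :=
  {u | u.Sublist w ∧ u.length ≤ k}

/-- `u ∼ₖ v` : same subsequences of length at most `k`. -/
def simk {α : Type*} (k : ℕ) (u v : List α) : Prop := subk k u = subk k v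

/-- `L` is `k`-piecewise testable. -/
def IsKPT {α : Type*} (k : ℕ) (L : Set (List α)) : Prop :=
  ∀ u v : List α, simk k u v → (u ∈ L ↔ v ∈ L)

lemma strip_first {α : Type*} (a : α) (x v' v'' : List α) (hav : a ∉ v')
    (hs : (a :: x).Sublist (v' ++ a :: v'')) : x.Sublist v'' := by
  induction v' with
  | nil =>
    cases hs with
    | cons _ h => exact ((List.sublist_cons_self a x).trans h)
    | cons_cons _ h => exact h
  | cons b v' ih =>
    cases hs with
    | cons _ h => exact ih (fun hm => hav (List.mem_cons_of_mem b hm)) h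
    | cons_cons _ h => simp at hav

lemma subk_side {α : Type*} (ℓ : ℕ) (hℓ : 1 ≤ ℓ) (u v u' u'' v' v'' : List α) (a : α)
    (h : simk ℓ u v)
    (hu : u = u' ++ a :: u'') (hv : v = v' ++ a :: v'')
    (hav : a ∉ v') :
    subk (ℓ - 1) u'' ⊆ subk (ℓ - 1) v'' := by
  rintro x ⟨hx, hlen⟩
  have hax : (a :: x) ∈ subk ℓ u := by
    refine ⟨?_, ?_⟩
    · rw [hu]
      exact List.sublist_append_of_sublist_right (List.cons_sublist_cons.mpr hx)
    · simpa using Nat.add_le_of_le_sub hℓ hlen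
  have hax' : (a :: x) ∈ subk ℓ v := by rw [← h]; exact hax
  refine ⟨strip_first a x v' v'' hav (hv ▸ hax'.1), hlen⟩

theorem stmt_1 {α : Type*} (ℓ : ℕ) (hℓ : 1 ≤ ℓ) (u v u' u'' v' v'' : List α) (a : α)
    (h : simk ℓ u v)
    (hu : u = u' ++ a :: u'') (hv : v = v' ++ a :: v'')
    (hau : a ∉ u') (hav : a ∉ v') :
    simk (ℓ - 1) u'' v'' := by
  apply Set.Subset.antisymm
  · exact subk_side ℓ hℓ u v u' u'' v' v'' a h hu hv hav
  · exact subk_side ℓ hℓ v u v' v'' u' u'' a h.symm hv hu hau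
end

section
/- Let ℓ ≥ 1, a ∈ Σ, and words v₀, v₁ ∈ Σ*. If sub_{ℓ−1}(v₀·a·v₁) = sub_{ℓ−1}(v₁), then a·v₁ ∼_{ℓ−1} v₁. -/
theorem stmt_3 {α : Type*} (ℓ : ℕ) (hℓ : 1 ≤ ℓ) (a : α) (v₀ v₁ : List α)
    (h : subk (ℓ - 1) (v₀ ++ a :: v₁) = subk (ℓ - 1) v₁) :
    simk (ℓ - 1) (a :: v₁) v₁ := by
  apply Set.Subset.antisymm
  · intro u hu
    rw [← h]
    exact ⟨hu.1.trans (List.sublist_append_right v₀ _), hu.2⟩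
  · intro u hu
    exact ⟨hu.1.trans (List.sublist_cons_self a v₁), hu.2⟩
end

section
/- For every i ≥ 1, the language Lᵢ = {aⁱ} ∪ {aⁿ : n ≥ 2i+1} over the unary alphabet {a} is not 2i-piecewise testable; specifically, a^{2i} ∼_{2i} a^{2i+1}, yet a^{2i+1} ∈ Lᵢ and a^{2i} ∉ Lᵢ. -/
theorem stmt_5 (i : ℕ) (hi : 1 ≤ i)
    (L : Set (List Unit)) (hL : L = {w | w.length = i ∨ 2 * i + 1 ≤ w.length}) :
    simk (2 * i) (List.replicate (2 * i) ()) (List.replicate (2 * i + 1) ()) ∧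
    List.replicate (2 * i + 1) () ∈ L ∧
    List.replicate (2 * i) () ∉ L ∧
    ¬ IsKPT (2 * i) L := by
  have hsim : simk (2 * i) (List.replicate (2 * i) ()) (List.replicate (2 * i + 1) ()) := by
    ext u
    simp only [subk, Set.mem_setOf_eq, List.sublist_replicate_iff]
    constructor
    · rintro ⟨⟨n, hn, rfl⟩, hlen⟩
      exact ⟨⟨n, by omega, rfl⟩, hlen⟩
    · rintro ⟨⟨n, hn, rfl⟩, hlen⟩
      simp only [List.length_replicate] at hlen
      exact ⟨⟨n, by omega, rfl⟩, by simpa⟩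
  refine ⟨hsim, ?_, ?_, ?_⟩
  · simp [hL]
  · simp [hL]; omega
  · intro h
    have := (h _ _ hsim).mpr (by simp [hL])
    simp [hL] at this
    omega
end

section
/- Define w₀ = a₀ and w_ℓ = w_{ℓ−1} a_ℓ w_{ℓ−1}, and let wᵢ' be wᵢ with its last letter removed (so wᵢ = wᵢ'·a₀). Suppose u ∈ Σ* is such that u·a₀ embeds into wᵢ'·a₀ as a subsequence, but every embedding of u·a₀ into wᵢ'·a₀ must map the final a₀ of u·a₀ to the final letter of wᵢ'·a₀ (i.e., u·a₀ does not embed into wᵢ'). Then |u| ≥ i. -/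
/-- `w₀ = a₀`, `w_{ℓ+1} = w_ℓ · a_{ℓ+1} · w_ℓ`, letters `aⱼ` encoded as `j : ℕ`. -/
def wrd : ℕ → List ℕ
  | 0 => [0]
  | (ℓ + 1) => wrd ℓ ++ [ℓ + 1] ++ wrd ℓ

lemma wrd_ne_nil (i : ℕ) : wrd i ≠ [] := by
  cases i <;> simp [wrd]

lemma wrd_drop (i : ℕ) : (wrd i).dropLast ++ [0] = wrd i := by
  induction i with
  | zero => simp [wrd]
  | succ n ih =>
    show ((wrd n ++ [n+1]) ++ wrd n).dropLast ++ [0] = _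
    rw [List.dropLast_append_of_ne_nil (wrd_ne_nil n), List.append_assoc, ih]
    simp [wrd]

theorem stmt_10 (i : ℕ) (u : List ℕ)
    (h₁ : (u ++ [0]).Sublist ((wrd i).dropLast ++ [0]))
    (h₂ : ¬ (u ++ [0]).Sublist ((wrd i).dropLast)) :
    i ≤ u.length := by
  induction i generalizing u with
  | zero => exact Nat.zero_le _
  | succ n ih =>
    have hw : wrd (n+1) = (wrd n ++ [n+1]) ++ wrd n := by simp [wrd]
    have hdl : (wrd (n+1)).dropLast = (wrd n ++ [n+1]) ++ (wrd n).dropLast := by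
      rw [hw, List.dropLast_append_of_ne_nil (wrd_ne_nil n)]
    have h₁' : (u ++ [0]).Sublist ((wrd n ++ [n+1]) ++ wrd n) := by
      rw [wrd_drop (n+1), hw] at h₁; exact h₁
    obtain ⟨s, t, hst, hs, ht⟩ := List.sublist_append_iff.mp h₁'
    rcases t.eq_nil_or_concat with rfl | ⟨t', c, rfl⟩
    · exfalso; apply h₂
      rw [hdl]
      rw [List.append_nil] at hst
      exact (hst ▸ hs).trans (List.sublist_append_left _ _)
    · rw [List.concat_eq_append] at hst ht
      rw [← List.append_assoc] at hst
      have hinj := List.append_inj' hst rfl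
      obtain ⟨rfl, hc⟩ := hinj
      have hc0 : c = 0 := by simpa using hc.symm
      subst hc0
      rcases List.eq_nil_or_concat s with rfl | ⟨s', c', rfl⟩
      · exfalso; apply h₂
        rw [hdl, List.nil_append]
        rw [List.nil_append] at hst
        rw [← hst] at ht
        exact ht.trans ((List.sublist_append_left (wrd n) [n+1]).trans
          (List.sublist_append_left _ _))
      · have hn : ¬ (t' ++ [0]).Sublist ((wrd n).dropLast) := by
          intro hc
          apply h₂
          rw [hdl, List.append_assoc]
          exact List.Sublist.append hs hc
        have hle := ih t' (by rw [wrd_drop n]; exact ht) hn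
        simp only [List.concat_eq_append, List.length_append, List.length_singleton]
        omega
end

section
/- Let L over the alphabet {a,b,c} be the language denoted by the regular expression ab* + c(a+b)*, i.e., L = {a bⁿ : n ≥ 0} ∪ {c w : w ∈ {a,b}*}. Then for every n ≥ 0, the word c·a·(b·a)ⁿ belongs to L·Lᴿ, while the word c·a·(b·a)ⁿ·b does not belong to L·Lᴿ. -/
lemma aux1 (n : ℕ) : (0 : Fin 3) :: (List.replicate n ([1, 0] : List (Fin 3))).flatten
    = (List.replicate n ([0, 1] : List (Fin 3))).flatten ++ [0] := by
  induction n with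
  | zero => simp
  | succ k ih => simp_all [List.replicate_succ]

lemma aux2 (n : ℕ) : ∀ x ∈ (List.replicate n ([0, 1] : List (Fin 3))).flatten,
    x = 0 ∨ x = 1 := by
  induction n with
  | zero => simp
  | succ k ih =>
    intro x hx
    rw [List.replicate_succ] at hx
    rcases List.mem_append.1 hx with h | h
    · simp only [List.mem_cons, List.not_mem_nil, or_false] at h
      tauto
    · exact ih x h

lemma aux3 (n : ℕ) : ∀ x ∈ (List.replicate n ([1, 0] : List (Fin 3))).flatten,
    x = 0 ∨ x = 1 := by
  induction n with
  | zero => simp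
  | succ k ih =>
    intro x hx
    rw [List.replicate_succ] at hx
    rcases List.mem_append.1 hx with h | h
    · simp only [List.mem_cons, List.not_mem_nil, or_false] at h
      tauto
    · exact ih x h

theorem stmt_14 (L : Set (List (Fin 3)))
    (hL : L = {w | (∃ n : ℕ, w = 0 :: List.replicate n 1) ∨
                   (∃ v : List (Fin 3), (∀ x ∈ v, x = 0 ∨ x = 1) ∧ w = 2 :: v)})
    (n : ℕ) :
    ([2, 0] ++ (List.replicate n ([1, 0] : List (Fin 3))).flatten
      ∈ {w | ∃ u v : List (Fin 3), u ∈ L ∧ v.reverse ∈ L ∧ w = u ++ v}) ∧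
    ([2, 0] ++ (List.replicate n ([1, 0] : List (Fin 3))).flatten ++ [1]
      ∉ {w | ∃ u v : List (Fin 3), u ∈ L ∧ v.reverse ∈ L ∧ w = u ++ v}) := by
  subst hL
  constructor
  · refine ⟨2 :: (List.replicate n ([0, 1] : List (Fin 3))).flatten, [0], ?_, ?_, ?_⟩
    · exact Or.inr ⟨_, aux2 n, rfl⟩
    · exact Or.inl ⟨0, by simp⟩
    · simp only [List.cons_append, List.nil_append]
      rw [aux1]
  · rintro ⟨u, v, hu, hv, heq⟩
    rcases hu with ⟨m, rfl⟩ | ⟨v₀, hv₀, rfl⟩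
    · exact absurd (congrArg (·.head?) heq) (by simp)
    · -- from heq : [2,0] ++ J ++ [1] = (2::v₀) ++ v
      have h2 : (0 : Fin 3) :: (List.replicate n ([1, 0] : List (Fin 3))).flatten ++ [1]
          = v₀ ++ v := by
        have := heq
        simp only [List.cons_append, List.append_assoc, List.cons.injEq] at this
        exact this.2
      -- all elements of v are 0 or 1
      have hvall : ∀ x ∈ v, x = 0 ∨ x = 1 := by
        intro x hx
        have : x ∈ (0 : Fin 3) :: (List.replicate n ([1, 0] : List (Fin 3))).flatten ++ [1] := by
          rw [h2]; exact List.mem_append_right _ hx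
        rw [List.cons_append, List.mem_cons, List.mem_append] at this
        rcases this with h | h | h
        · exact Or.inl h
        · exact aux3 n x h
        · simp_all
      rcases hv with ⟨m, hm⟩ | ⟨v₁, hv₁, hrev⟩
      · -- v = replicate m 1 ++ [0], but word ends in 1
        have hv' : v = (List.replicate m (1 : Fin 3)).reverse ++ [0] := by
          have := congrArg List.reverse hm
          simpa using this
        rw [hv'] at h2
        have := congrArg List.reverse h2
        simp [List.reverse_append] at this
      · -- v.reverse starts with 2, but 2 ∉ v
        have h2mem : (2 : Fin 3) ∈ v := by
          have : (2 : Fin 3) ∈ v.reverse := by rw [hrev]; simp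
          simpa using this
        rcases hvall 2 h2mem with h | h <;> exact absurd h (by decide)
end

section
/- Let L over {a,b,c} be given by ab* + c(a+b)*. Then the language L·Lᴿ is not piecewise testable, i.e., there is no k such that L·Lᴿ is k-piecewise testable. -/
/-- Any word over the letters of `p` of length ≤ m is a sublist of `p^m`. -/
lemma sublist_flatten_replicate {α : Type*} (p : List α) :
    ∀ (m : ℕ) (s : List α), (∀ x ∈ s, x ∈ p) → s.length ≤ m →
      s.Sublist (List.replicate m p).flatten := by
  intro m
  induction m with
  | zero =>
    intro s h hl
    have : s = [] := List.length_eq_zero_iff.mp (Nat.le_zero.mp hl)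
    simp [this]
  | succ n ih =>
    intro s h hl
    cases s with
    | nil => simp
    | cons x t =>
      rw [List.replicate_succ, List.flatten_cons]
      have h1 : [x].Sublist p := List.singleton_sublist.mpr (h x (by simp))
      have h2 : t.Sublist (List.replicate n p).flatten :=
        ih t (fun y hy => h y (by simp [hy])) (by simpa using Nat.succ_le_succ_iff.mp hl)
      simpa using h1.append h2

lemma subk_flatten_replicate {α : Type*} (p : List α) (K : ℕ) :
    subk K (List.replicate K p).flatten = {s | (∀ x ∈ s, x ∈ p) ∧ s.length ≤ K} := by
  ext s
  simp only [subk, Set.mem_setOf_eq]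
  constructor
  · rintro ⟨hs, hl⟩
    refine ⟨fun x hx => ?_, hl⟩
    have := hs.subset hx
    rcases List.mem_flatten.mp this with ⟨l, hl', hx'⟩
    rwa [List.eq_of_mem_replicate hl'] at hx'
  · rintro ⟨hs, hl⟩
    exact ⟨sublist_flatten_replicate p K s hs hl, hl⟩

/-- `simk` is a right congruence. -/
lemma simk_append_right {α : Type*} {k : ℕ} {u v : List α} (h : simk k u v) (w : List α) :
    simk k (u ++ w) (v ++ w) := by
  have key : ∀ u v : List α, subk k u = subk k v → subk k (u ++ w) ⊆ subk k (v ++ w) := by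
    intro u v huv s hs
    obtain ⟨hsub, hlen⟩ := hs
    rcases List.sublist_append_iff.mp hsub with ⟨l₁, l₂, rfl, h₁, h₂⟩
    have hl₁ : l₁ ∈ subk k u := ⟨h₁, le_trans (by simp) hlen⟩
    rw [huv] at hl₁
    exact ⟨hl₁.1.append h₂, hlen⟩
  exact Set.Subset.antisymm (key u v h) (key v u h.symm)

theorem stmt_15 (L : Set (List (Fin 3)))
    (hL : L = {w | (∃ n : ℕ, w = 0 :: List.replicate n 1) ∨
                   (∃ v : List (Fin 3), (∀ x ∈ v, x = 0 ∨ x = 1) ∧ w = 2 :: v)}) :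
    ¬ ∃ k : ℕ, IsKPT k {w | ∃ u v : List (Fin 3), u ∈ L ∧ v.reverse ∈ L ∧ w = u ++ v} := by
  rintro ⟨k, hk⟩
  set K := k + 1 with hK
  -- the two witnesses
  set A : List (Fin 3) := (List.replicate K ([0, 1] : List (Fin 3))).flatten ++ [2] with hA
  set B : List (Fin 3) := (List.replicate K ([1, 0] : List (Fin 3))).flatten ++ [2] with hB
  -- they are simk K, hence simk k
  have hsimK : simk K A B := by
    apply simk_append_right
    show subk K _ = subk K _
    rw [subk_flatten_replicate, subk_flatten_replicate]
    ext s
    simp only [Set.mem_setOf_eq, List.mem_cons, List.not_mem_nil, or_false]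
    constructor
    · rintro ⟨h1, h2⟩; exact ⟨fun x hx => (h1 x hx).symm.imp id id |>.symm |> (Or.symm), h2⟩
    · rintro ⟨h1, h2⟩; exact ⟨fun x hx => Or.symm (h1 x hx), h2⟩
  have hsim : simk k A B := by
    have H := Set.ext_iff.mp hsimK
    apply Set.ext
    intro s
    have hs := H s
    simp only [subk, Set.mem_setOf_eq] at hs ⊢
    constructor
    · rintro ⟨h1, h2⟩; exact ⟨(hs.mp ⟨h1, h2.trans (Nat.le_succ k)⟩).1, h2⟩
    · rintro ⟨h1, h2⟩; exact ⟨(hs.mpr ⟨h1, h2.trans (Nat.le_succ k)⟩).1, h2⟩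
  -- A is in the product language
  have hAin : A ∈ {w | ∃ u v : List (Fin 3), u ∈ L ∧ v.reverse ∈ L ∧ w = u ++ v} := by
    refine ⟨[0], (1 :: (List.replicate k ([0, 1] : List (Fin 3))).flatten) ++ [2], ?_, ?_, ?_⟩
    · rw [hL]; exact Or.inl ⟨0, rfl⟩
    · rw [hL]
      refine Or.inr ⟨(1 :: (List.replicate k ([0, 1] : List (Fin 3))).flatten).reverse,
        ?_, by simp⟩
      intro x hx
      rw [List.mem_reverse] at hx
      rcases List.mem_cons.mp hx with h | h
      · exact Or.inr h
      · rcases List.mem_flatten.mp h with ⟨l, hl, hx'⟩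
        rw [List.eq_of_mem_replicate hl] at hx'
        rcases List.mem_cons.mp hx' with h' | h'
        · exact Or.inl h'
        · simp at h'; exact Or.inr h'
    · rw [hA, hK, List.replicate_succ, List.flatten_cons]
      simp
  -- B is not in the product language
  have hBnotin : B ∉ {w | ∃ u v : List (Fin 3), u ∈ L ∧ v.reverse ∈ L ∧ w = u ++ v} := by
    rintro ⟨u, v, hu, _, heq⟩
    rw [hL] at hu
    have hBhead : B = 1 :: ((0 :: (List.replicate k ([1, 0] : List (Fin 3))).flatten) ++ [2]) := by
      rw [hB, hK, List.replicate_succ, List.flatten_cons]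
      simp
    rcases hu with ⟨n, rfl⟩ | ⟨w, _, rfl⟩
    · rw [hBhead] at heq
      simp only [List.cons_append, List.cons.injEq] at heq
      exact absurd heq.1 (by decide)
    · rw [hBhead] at heq
      simp only [List.cons_append, List.cons.injEq] at heq
      exact absurd heq.1 (by decide)
  exact hBnotin ((hk A B hsim).mp hAin)
end

section
/- Let L be a k-piecewise testable language over Σ, let a ∉ Σ be a new letter, and let p : (Σ ∪ {a})* → Σ* erase the letter a. Define L' = {w ∈ (Σ ∪ {a})* : w contains at least one occurrence of a, and the suffix of w after its first occurrence of a, with all further a's erased, belongs to L}. Then L' is (k+1)-piecewise testable. -/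
theorem map_some_sublist' {α : Type*} {x : List α} {l : List (Option α)}
    (h : x.Sublist (l.filterMap id)) : (x.map some).Sublist l := by
  induction l generalizing x with
  | nil => simpa using h
  | cons a l ih =>
    cases a with
    | none => exact (ih (by simpa using h)).trans (List.sublist_cons_self _ _)
    | some b =>
      simp only [List.filterMap_cons, id] at h
      rcases List.sublist_cons_iff.mp h with h' | ⟨r, rfl, hr⟩
      · exact (ih h').trans (List.sublist_cons_self _ _)
      · simpa using (ih hr).cons_cons (some b)

theorem key_iff {α : Type*} {pre suf : List (Option α)} (hpre : none ∉ pre) (x : List α) :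
    x.Sublist (suf.filterMap id) ↔ (none :: x.map some).Sublist (pre ++ none :: suf) := by
  constructor
  · intro h
    exact ((map_some_sublist' h).cons_cons none).trans (List.sublist_append_right pre _)
  · intro h
    rcases List.sublist_append_iff.mp h with ⟨a, b, hab, ha, hb⟩
    cases a with
    | cons c a' =>
      have : c = none := by
        have := congrArg (fun l => l.head?) hab
        simp at this; exact this.symm
      subst this
      exact absurd (ha.subset (by simp)) hpre
    | nil =>
      simp at hab; subst hab
      have hms : (x.map some).Sublist suf := by
        rcases List.sublist_cons_iff.mp hb with h' | ⟨r, hr, hr'⟩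
        · exact ((List.sublist_cons_self none (x.map some)).trans h')
        · have : r = x.map some := by simpa using hr.symm
          exact this ▸ hr'
      have := hms.filterMap id
      simpa using this

theorem first_occ {α : Type*} {a : α} {l : List α} (h : a ∈ l) :
    ∃ s t, l = s ++ a :: t ∧ a ∉ s := by
  induction l with
  | nil => simp at h
  | cons b l ih =>
    by_cases hb : b = a
    · exact ⟨[], l, by simp [hb], by simp⟩
    · have h' : a ∈ l := by
        rcases List.mem_cons.mp h with h | h
        · exact absurd h.symm hb
        · exact h
      rcases ih h' with ⟨s, t, rfl, hs⟩
      exact ⟨b :: s, t, rfl, by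
        simp only [List.mem_cons, not_or]
        exact ⟨fun h => hb h.symm, hs⟩⟩

theorem stmt_17 {α : Type*} (k : ℕ) (L : Set (List α)) (hL : IsKPT k L) :
    IsKPT (k + 1)
      {w : List (Option α) | ∃ u v : List (Option α),
        w = u ++ none :: v ∧ none ∉ u ∧ v.filterMap id ∈ L} := by
  have aux : ∀ w₁ w₂ : List (Option α), simk (k+1) w₁ w₂ →
      w₁ ∈ {w : List (Option α) | ∃ u v : List (Option α),
        w = u ++ none :: v ∧ none ∉ u ∧ v.filterMap id ∈ L} →
      w₂ ∈ {w : List (Option α) | ∃ u v : List (Option α),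
        w = u ++ none :: v ∧ none ∉ u ∧ v.filterMap id ∈ L} := by
    rintro w₁ w₂ hsim ⟨u, v, rfl, hu, hv⟩
    have hmem : ([none] : List (Option α)) ∈ subk (k+1) w₂ := by
      rw [show subk (k+1) w₂ = subk (k+1) (u ++ none :: v) from hsim.symm]
      exact ⟨List.singleton_sublist.mpr (by simp), by simp⟩
    have hnone : (none : Option α) ∈ w₂ := List.singleton_sublist.mp hmem.1
    obtain ⟨s, t, rfl, hs⟩ := first_occ hnone
    refine ⟨s, t, rfl, hs, (hL _ _ ?_).mp hv⟩
    ext x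
    simp only [subk, Set.mem_setOf_eq]
    constructor
    · rintro ⟨hx, hk⟩
      have h1 : (none :: x.map some) ∈ subk (k+1) (u ++ none :: v) :=
        ⟨(key_iff hu x).mp hx, by simp [hk]⟩
      rw [hsim] at h1
      exact ⟨(key_iff hs x).mpr h1.1, hk⟩
    · rintro ⟨hx, hk⟩
      have h1 : (none :: x.map some) ∈ subk (k+1) (s ++ none :: t) :=
        ⟨(key_iff hs x).mp hx, by simp [hk]⟩
      rw [← hsim] at h1
      exact ⟨(key_iff hu x).mpr h1.1, hk⟩
  intro w₁ w₂ h
  exact ⟨aux w₁ w₂ h, aux w₂ w₁ (by unfold simk at h ⊢; exact h.symm)⟩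
end
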